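/- For h ≥ 2 and any a ∈ (ℤ/2^h)^n, wt_L(a) + wt_L(a − 2^{h−2}·𝟙) = 2·wt_H(β(a)) + 2^{h−2}·n, where 𝟙 is the all-ones vector, wt_L is the coordinatewise sum of Lee weights, and β is the first-half Gray map applied coordinatewise. -/

import Mathlib

open Finset

/-- Hamming weight of a binary word. -/
def wtH {m : ℕ} (c : Fin m → ZMod 2) : ℕ := (Finset.univ.filter fun i => c i ≠ 0).card

/-- The generalized Gray map `φ : ℤ/2^h → (ℤ/2)^{2^{h-1}}`. -/
def grayMap (h : ℕ) (a : ZMod (2 ^ h)) : Fin (2 ^ (h - 1)) → ZMod 2 := fun i =>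
  if a.val ≤ 2 ^ (h - 1) then (if 2 ^ (h - 1) - a.val ≤ (i : ℕ) then 1 else 0)
  else (if (i : ℕ) < 2 ^ h - a.val then 1 else 0)

/-- First half of the generalized Gray map. -/
def grayβ (h : ℕ) (hh : 2 ≤ h) (a : ZMod (2 ^ h)) : Fin (2 ^ (h - 2)) → ZMod 2 := fun i =>
  grayMap h a ⟨(i : ℕ), lt_of_lt_of_le i.2 (Nat.pow_le_pow_right (by norm_num) (by omega))⟩

/-- Second half of the generalized Gray map. -/
def grayγ (h : ℕ) (hh : 2 ≤ h) (a : ZMod (2 ^ h)) : Fin (2 ^ (h - 2)) → ZMod 2 := fun i =>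
  grayMap h a ⟨2 ^ (h - 2) + (i : ℕ), by
    have h1 : h - 1 = (h - 2) + 1 := by omega
    rw [h1, pow_succ]
    have := i.2
    omega⟩

/-- Lee weight of a word over `ℤ/2^h`. -/
def wtL {h n : ℕ} (a : Fin n → ZMod (2 ^ h)) : ℕ :=
  ∑ i : Fin n, min (a i).val (2 ^ h - (a i).val)

lemma sum_range_ite_lt' (q c : ℕ) : (∑ i ∈ Finset.range q, if i < c then 1 else 0) = min q c := by
  induction q with
  | zero => simp
  | succ q ih => rw [Finset.sum_range_succ, ih]; split <;> omega

lemma card_filter_lt' (q c : ℕ) :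
    ((Finset.univ : Finset (Fin q)).filter fun i : Fin q => (i:ℕ) < c).card = min q c := by
  have h1 : ((Finset.univ : Finset (Fin q)).filter fun i : Fin q => (i:ℕ) < c).card
      = ∑ i : Fin q, if (i:ℕ) < c then 1 else 0 := Finset.card_filter _ _
  rw [h1, Fin.sum_univ_eq_sum_range (fun i => if i < c then (1:ℕ) else 0) q, sum_range_ite_lt']

lemma sum_range_ite_le' (q c : ℕ) : (∑ i ∈ Finset.range q, if c ≤ i then 1 else 0) = q - min q c := by
  induction q with
  | zero => simp
  | succ q ih => rw [Finset.sum_range_succ, ih]; split <;> omega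

lemma card_filter_le' (q c : ℕ) :
    ((Finset.univ : Finset (Fin q)).filter fun i : Fin q => c ≤ (i:ℕ)).card = q - min q c := by
  have h1 : ((Finset.univ : Finset (Fin q)).filter fun i : Fin q => c ≤ (i:ℕ)).card
      = ∑ i : Fin q, if c ≤ (i:ℕ) then 1 else 0 := Finset.card_filter _ _
  rw [h1, Fin.sum_univ_eq_sum_range (fun i => if c ≤ i then (1:ℕ) else 0) q, sum_range_ite_le']

lemma wtH_grayβ (h : ℕ) (hh : 2 ≤ h) (a : ZMod (2 ^ h)) :
    wtH (grayβ h hh a) =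
      if a.val ≤ 2 ^ (h - 1) then 2 ^ (h - 2) - min (2 ^ (h - 2)) (2 ^ (h - 1) - a.val)
      else min (2 ^ (h - 2)) (2 ^ h - a.val) := by
  unfold wtH grayβ grayMap
  by_cases hv : a.val ≤ 2 ^ (h - 1)
  · simp only [hv, if_true]
    rw [← card_filter_le' (2 ^ (h - 2)) (2 ^ (h - 1) - a.val)]
    congr 1
    apply Finset.filter_congr
    intro i _
    split <;> simp_all
  · simp only [hv, if_false]
    rw [← card_filter_lt' (2 ^ (h - 2)) (2 ^ h - a.val)]
    congr 1
    apply Finset.filter_congr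
    intro i _
    split <;> simp_all

lemma pow_split (h : ℕ) (hh : 2 ≤ h) :
    2 ^ h = 4 * 2 ^ (h - 2) ∧ 2 ^ (h - 1) = 2 * 2 ^ (h - 2) := by
  constructor
  · have e : h = (h - 2) + 2 := by omega
    conv_lhs => rw [e]
    rw [pow_add]; ring
  · have e : h - 1 = (h - 2) + 1 := by omega
    rw [e, pow_succ]; ring

lemma val_sub_q (h : ℕ) (hh : 2 ≤ h) (a : ZMod (2 ^ h)) :
    (a - ((2 ^ (h - 2) : ℕ) : ZMod (2 ^ h))).val =
      if 2 ^ (h - 2) ≤ a.val then a.val - 2 ^ (h - 2) else a.val + 3 * 2 ^ (h - 2) := by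
  obtain ⟨h4, _⟩ := pow_split h hh
  have hq : (0:ℕ) < 2 ^ (h - 2) := Nat.pow_pos (by norm_num)
  haveI : NeZero (2 ^ h) := ⟨by positivity⟩
  have key : a - ((2 ^ (h - 2) : ℕ) : ZMod (2 ^ h)) = a + ((3 * 2 ^ (h - 2) : ℕ) : ZMod (2 ^ h)) := by
    have : ((2 ^ (h - 2) : ℕ) : ZMod (2 ^ h)) + ((3 * 2 ^ (h - 2) : ℕ) : ZMod (2 ^ h)) = 0 := by
      rw [← Nat.cast_add]
      have : 2 ^ (h - 2) + 3 * 2 ^ (h - 2) = 2 ^ h := by omega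
      rw [this, ZMod.natCast_self]
    linear_combination -this
  rw [key, ZMod.val_add, ZMod.val_natCast]
  have hva : a.val < 2 ^ h := ZMod.val_lt a
  have h3q : 3 * 2 ^ (h - 2) % 2 ^ h = 3 * 2 ^ (h - 2) := Nat.mod_eq_of_lt (by omega)
  rw [h3q]
  by_cases hc : 2 ^ (h - 2) ≤ a.val
  · rw [if_pos hc]
    rw [Nat.mod_eq_sub_mod (by omega), Nat.mod_eq_of_lt (by omega)]
    omega
  · rw [if_neg hc, Nat.mod_eq_of_lt (by omega)]

lemma key_coord (h : ℕ) (hh : 2 ≤ h) (a : ZMod (2 ^ h)) :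
    min a.val (2 ^ h - a.val) +
      min (a - ((2 ^ (h - 2) : ℕ) : ZMod (2 ^ h))).val
        (2 ^ h - (a - ((2 ^ (h - 2) : ℕ) : ZMod (2 ^ h))).val) =
      2 * wtH (grayβ h hh a) + 2 ^ (h - 2) := by
  rw [wtH_grayβ, val_sub_q h hh]
  obtain ⟨h4, h2⟩ := pow_split h hh
  have hq : (0:ℕ) < 2 ^ (h - 2) := Nat.pow_pos (by norm_num)
  have hva : a.val < 2 ^ h := ZMod.val_lt a
  generalize a.val = v at hva ⊢
  rw [h4] at hva
  rw [h2]
  split_ifs <;> omega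

theorem lee_weight_beta_identity (h : ℕ) (hh : 2 ≤ h) (n : ℕ) (a : Fin n → ZMod (2 ^ h)) :
    wtL a + wtL (fun i => a i - ((2 ^ (h - 2) : ℕ) : ZMod (2 ^ h))) =
      2 * (∑ i : Fin n, wtH (grayβ h hh (a i))) + 2 ^ (h - 2) * n := by
  unfold wtL
  rw [← Finset.sum_add_distrib, Finset.mul_sum]
  have : ∀ i : Fin n,
      min (a i).val (2 ^ h - (a i).val) +
        min (a i - ((2 ^ (h - 2) : ℕ) : ZMod (2 ^ h))).val
          (2 ^ h - (a i - ((2 ^ (h - 2) : ℕ) : ZMod (2 ^ h))).val)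
      = 2 * wtH (grayβ h hh (a i)) + 2 ^ (h - 2) := fun i => key_coord h hh (a i)
  rw [Finset.sum_congr rfl fun i _ => this i, Finset.sum_add_distrib, Finset.sum_const,
    Finset.card_univ, Fintype.card_fin, smul_eq_mul, mul_comm]
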